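/- Let 𝒮 be a compact metric space and P a Markov transition kernel on 𝒮 with the strong Feller property. If there exists exactly one minimal closed invariant set in 𝒮, then the invariant probability measure for P is unique: any two invariant probability measures coincide. -/

import Mathlib

open MeasureTheory ENNReal

/-- A closed set `C` is invariant for the kernel `P` if `P(s, C) = 1` for every `s ∈ C`. -/
def ClosedInvariantSet {S : Type*} [TopologicalSpace S] [MeasurableSpace S]
    (P : S → Measure S) (C : Set S) : Prop :=
  C.Nonempty ∧ IsClosed C ∧ ∀ s ∈ C, P s C = 1

/-- A nonempty closed invariant set is minimal if it contains no proper nonempty closed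
invariant subset. -/
def MinimalClosedInvariantSet {S : Type*} [TopologicalSpace S] [MeasurableSpace S]
    (P : S → Measure S) (C : Set S) : Prop :=
  ClosedInvariantSet P C ∧ ∀ D : Set S, ClosedInvariantSet P D → D ⊆ C → D = C

namespace stmt11Aux

/-- An ENNReal cancellation helper. -/
lemma cancel {a b c d : ℝ≥0∞} (hab : a ≤ b) (hcd : c ≤ d)
    (h : b + d = a + c) (ha : a ≠ ∞) (hc : c ≠ ∞) : b = a ∧ d = c := by
  have hbd : b + d ≠ ∞ := by rw [h]; exact ENNReal.add_ne_top.2 ⟨ha, hc⟩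
  have hb : b ≠ ∞ := fun h' => hbd (by simp [h'])
  constructor
  · refine le_antisymm ?_ hab
    exact ENNReal.le_of_add_le_add_right hc ((add_le_add_right hcd b).trans_eq h)
  · refine le_antisymm ?_ hcd
    exact ENNReal.le_of_add_le_add_left hb (h.le.trans (add_le_add_left hab c))

/-- The (topological) support of a measure. -/
def mSupp {S : Type*} [TopologicalSpace S] [MeasurableSpace S] (ν : Measure S) : Set S :=
  {x | ∀ U : Set S, IsOpen U → x ∈ U → 0 < ν U}

variable {S : Type*} [MetricSpace S] [CompactSpace S] [MeasurableSpace S] [BorelSpace S]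

lemma isClosed_mSupp (ν : Measure S) : IsClosed (mSupp ν) := by
  rw [← isOpen_compl_iff, isOpen_iff_forall_mem_open]
  intro x hx
  simp only [mSupp, Set.mem_compl_iff, Set.mem_setOf_eq, not_forall] at hx
  obtain ⟨U, hUo, hxU, hU0⟩ := hx
  refine ⟨U, fun y hy => ?_, hUo, hxU⟩
  simp only [mSupp, Set.mem_compl_iff, Set.mem_setOf_eq, not_forall]
  exact ⟨U, hUo, hy, hU0⟩

lemma mSupp_compl_null (ν : Measure S) : ν (mSupp ν)ᶜ = 0 := by
  have hch : ∀ x : ↥(mSupp ν)ᶜ, ∃ U : Set S, IsOpen U ∧ (x : S) ∈ U ∧ ν U = 0 := by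
    rintro ⟨x, hx⟩
    simp only [mSupp, Set.mem_compl_iff, Set.mem_setOf_eq, not_forall] at hx
    obtain ⟨U, hUo, hxU, hU0⟩ := hx
    exact ⟨U, hUo, hxU, by simpa using hU0⟩
  choose U hUo hxU hU0 using hch
  obtain ⟨T, hTc, hTU⟩ := TopologicalSpace.isOpen_iUnion_countable U hUo
  have hcover : (mSupp ν)ᶜ ⊆ ⋃ i ∈ T, U i := by
    rw [hTU]
    intro x hx
    exact Set.mem_iUnion.2 ⟨⟨x, hx⟩, hxU _⟩
  refine le_antisymm ((measure_mono hcover).trans ?_) (zero_le)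
  rw [(measure_biUnion_null_iff hTc).2 fun i _ => hU0 i]

variable (P : S → Measure S) [∀ s, IsProbabilityMeasure (P s)]

lemma kernel_null_of_null (hP : Measurable P)
    (hSF : ∀ f : S → ℝ, Measurable f → (∃ M, ∀ x, |f x| ≤ M) →
      Continuous fun s => ∫ x, f x ∂(P s))
    (ν : Measure S)
    (hν : ∀ A : Set S, MeasurableSet A → ν A = ∫⁻ s, P s A ∂ν)
    {A : Set S} (hA : MeasurableSet A) (hA0 : ν A = 0)
    {x : S} (hx : x ∈ mSupp ν) :
    P x A = 0 := by
  by_contra hne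
  have hmeas : Measurable fun s => P s A := (Measure.measurable_coe hA).comp hP
  have hae : ∀ᵐ s ∂ν, P s A = 0 := by
    have h0 : ∫⁻ s, P s A ∂ν = 0 := (hν A hA) ▸ hA0
    exact (lintegral_eq_zero_iff hmeas).1 h0
  have hcont : Continuous fun s => (P s A).toReal := by
    have hb : ∀ y, |A.indicator (fun _ => (1 : ℝ)) y| ≤ 1 := by
      intro y
      by_cases hy : y ∈ A <;>
        simp [Set.indicator_of_mem, Set.indicator_of_notMem, hy]
    have h := hSF _ (measurable_const.indicator hA) ⟨1, hb⟩
    have heq : (fun s => ∫ y, A.indicator (fun _ => (1 : ℝ)) y ∂(P s))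
        = fun s => (P s A).toReal := by
      funext s
      rw [integral_indicator_const _ hA]
      simp [Measure.real]
    rwa [heq] at h
  have hpos : 0 < (P x A).toReal := ENNReal.toReal_pos hne (measure_ne_top _ _)
  set V := (fun s => (P s A).toReal) ⁻¹' Set.Ioi 0 with hV
  have hVopen : IsOpen V := isOpen_Ioi.preimage hcont
  have hxV : x ∈ V := hpos
  have hsub : ν V ≤ ν {s | ¬ P s A = 0} := by
    refine measure_mono fun s hs h0 => ?_
    simp only [hV, Set.mem_preimage, Set.mem_Ioi] at hs
    rw [h0] at hs
    simp at hs
  rw [ae_iff] at hae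
  have : ν V = 0 := le_antisymm (hsub.trans_eq hae) (zero_le)
  exact (hx V hVopen hxV).ne' this

lemma closedInvariant_mSupp (hP : Measurable P)
    (hSF : ∀ f : S → ℝ, Measurable f → (∃ M, ∀ x, |f x| ≤ M) →
      Continuous fun s => ∫ x, f x ∂(P s))
    (ν : Measure S) (hν0 : ν ≠ 0)
    (hν : ∀ A : Set S, MeasurableSet A → ν A = ∫⁻ s, P s A ∂ν) :
    ClosedInvariantSet P (mSupp ν) := by
  have hcl := isClosed_mSupp ν
  have hnull := mSupp_compl_null ν
  refine ⟨?_, hcl, ?_⟩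
  · by_contra h
    rw [Set.not_nonempty_iff_eq_empty] at h
    rw [h] at hnull
    simp only [Set.compl_empty] at hnull
    exact hν0 (Measure.measure_univ_eq_zero.1 hnull)
  · intro s hs
    have h0 : P s (mSupp ν)ᶜ = 0 :=
      kernel_null_of_null P hP hSF ν hν hcl.isOpen_compl.measurableSet hnull hs
    have h1 := measure_add_measure_compl (μ := P s) hcl.measurableSet
    rwa [h0, add_zero, measure_univ] at h1

/-- Every closed invariant set contains a minimal closed invariant set (Zorn). -/
lemma exists_minimal_subset {K : Set S} (hK : ClosedInvariantSet P K) :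
    ∃ m, m ⊆ K ∧ MinimalClosedInvariantSet P m := by
  have hch : ∀ c ⊆ {D | ClosedInvariantSet P D}, IsChain (· ⊆ ·) c → c.Nonempty →
      ∃ lb ∈ {D | ClosedInvariantSet P D}, ∀ t ∈ c, lb ⊆ t := by
    intro c hcS hchain hcne
    refine ⟨⋂₀ c, ?_, fun t ht => Set.sInter_subset_of_mem ht⟩
    have hcl : ∀ D ∈ c, IsClosed D := fun D hD => (hcS hD).2.1
    have hclK : IsClosed (⋂₀ c) := isClosed_sInter hcl
    haveI : Nonempty ↥c := hcne.to_subtype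
    have hdir : DirectedOn (· ⊇ ·) c := fun a ha b hb =>
      (hchain.total ha hb).elim (fun h => ⟨a, ha, subset_rfl, h⟩)
        (fun h => ⟨b, hb, h, subset_rfl⟩)
    have hne : (⋂₀ c).Nonempty :=
      IsCompact.nonempty_sInter_of_directed_nonempty_isCompact_isClosed hdir
        (fun D hD => (hcS hD).1) (fun D hD => (hcl D hD).isCompact) hcl
    refine ⟨hne, hclK, fun s hs => ?_⟩
    have hKc : P s (⋂₀ c)ᶜ = 0 := by
      rw [hclK.isOpen_compl.measure_eq_iSup_isClosed]
      refine le_antisymm (iSup_le fun F => iSup_le fun hFsub => iSup_le fun hFcl => ?_)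
        (zero_le)
      obtain ⟨i, hi⟩ := hFcl.isCompact.elim_directed_cover
        (fun i : ↥c => ((i : Set S))ᶜ) (fun i => (hcl _ i.2).isOpen_compl)
        (by
          intro y hy
          have hy' : y ∈ (⋂₀ c)ᶜ := hFsub hy
          simp only [Set.mem_compl_iff, Set.mem_sInter, not_forall] at hy'
          obtain ⟨D, hD, hyD⟩ := hy'
          exact Set.mem_iUnion.2 ⟨⟨D, hD⟩, hyD⟩)
        (by
          rintro ⟨a, ha⟩ ⟨b, hb⟩
          rcases hchain.total ha hb with h | h
          · exact ⟨⟨a, ha⟩, subset_rfl, Set.compl_subset_compl.2 h⟩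
          · exact ⟨⟨b, hb⟩, Set.compl_subset_compl.2 h, subset_rfl⟩)
      have h1 : P s (i : Set S) = 1 := (hcS i.2).2.2 s (Set.mem_sInter.1 hs _ i.2)
      have h2 := measure_mono (μ := P s) hi
      rwa [measure_compl (hcl _ i.2).measurableSet (measure_ne_top _ _), measure_univ,
        h1, tsub_self] at h2
    have h1 := measure_add_measure_compl (μ := P s) hclK.measurableSet
    rwa [hKc, add_zero, measure_univ] at h1
  obtain ⟨m, hmK, hm⟩ := zorn_superset_nonempty {D | ClosedInvariantSet P D} hch K hK
  exact ⟨m, hmK, hm.1, fun D hD hDm => hDm.antisymm (hm.2 hD hDm)⟩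

/-- The positive part of the difference of two invariant probability measures
(w.r.t. a Hahn set `u`) is again invariant. -/
lemma sub_invariant (hP : Measurable P)
    (μ₁ μ₂ : Measure S) [IsProbabilityMeasure μ₁] [IsProbabilityMeasure μ₂]
    (hμ₁ : ∀ A : Set S, MeasurableSet A → μ₁ A = ∫⁻ s, P s A ∂μ₁)
    (hμ₂ : ∀ A : Set S, MeasurableSet A → μ₂ A = ∫⁻ s, P s A ∂μ₂)
    {u : Set S} (hu : MeasurableSet u)
    (h1 : ∀ t, MeasurableSet t → t ⊆ u → μ₂ t ≤ μ₁ t)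
    (h2 : ∀ t, MeasurableSet t → t ⊆ uᶜ → μ₁ t ≤ μ₂ t) :
    ∀ A : Set S, MeasurableSet A →
      (μ₁.restrict u - μ₂.restrict u) A = ∫⁻ s, P s A ∂(μ₁.restrict u - μ₂.restrict u) := by
  set ν := μ₁.restrict u - μ₂.restrict u with hνdef
  have hle : μ₂.restrict u ≤ μ₁.restrict u := by
    refine Measure.le_iff.2 fun t ht => ?_
    rw [Measure.restrict_apply ht, Measure.restrict_apply ht]
    exact h1 _ (ht.inter hu) Set.inter_subset_right
  have hle' : μ₁.restrict uᶜ ≤ μ₂.restrict uᶜ := by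
    refine Measure.le_iff.2 fun t ht => ?_
    rw [Measure.restrict_apply ht, Measure.restrict_apply ht]
    exact h2 _ (ht.inter hu.compl) Set.inter_subset_right
  have key : ν + μ₂.restrict u = μ₁.restrict u := Measure.sub_add_cancel_of_le hle
  have happ : ∀ B : Set S, ν B + μ₂.restrict u B = μ₁.restrict u B := by
    intro B
    have := congrArg (fun m : Measure S => m B) key
    simpa using this
  have hmeasA : ∀ {A : Set S}, MeasurableSet A → Measurable fun s => P s A :=
    fun hA => (Measure.measurable_coe hA).comp hP
  have hfinlint : ∀ (μ : Measure S) [IsFiniteMeasure μ], ∀ B : Set S,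
      ∫⁻ s, P s B ∂μ ≠ ∞ := by
    intro μ _ B
    refine ((lintegral_mono fun s => (prob_le_one : P s B ≤ 1)).trans_lt ?_).ne
    rw [lintegral_one]
    exact measure_lt_top _ _
  have step1 : ∀ A : Set S, MeasurableSet A → ν A ≤ ∫⁻ s, P s A ∂ν := by
    intro A hA
    have hB : MeasurableSet (A ∩ u) := hA.inter hu
    have hρ1 : μ₁.restrict u A = μ₁.restrict u (A ∩ u) := by
      rw [Measure.restrict_apply hA, Measure.restrict_apply hB, Set.inter_assoc,
        Set.inter_self]
    have hρ2 : μ₂.restrict u A = μ₂.restrict u (A ∩ u) := by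
      rw [Measure.restrict_apply hA, Measure.restrict_apply hB, Set.inter_assoc,
        Set.inter_self]
    have hνA : ν A = ν (A ∩ u) := by
      have e1 := happ A
      have e2 := happ (A ∩ u)
      rw [hρ1, hρ2] at e1
      have := e1.trans e2.symm
      exact WithTop.add_right_cancel (measure_ne_top _ _) this
    rw [hνA]
    refine le_trans ?_ (lintegral_mono fun s =>
      measure_mono (Set.inter_subset_left : A ∩ u ⊆ A))
    set B := A ∩ u with hBdef
    have hBu : B ⊆ u := Set.inter_subset_right
    have hIB : ∫⁻ s, P s B ∂(μ₁.restrict u)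
        = (∫⁻ s, P s B ∂ν) + ∫⁻ s, P s B ∂(μ₂.restrict u) := by
      rw [← key, lintegral_add_measure]
    have hμ1B : μ₁ B = ∫⁻ s, P s B ∂(μ₁.restrict u) + ∫⁻ s, P s B ∂(μ₁.restrict uᶜ) := by
      rw [hμ₁ B hB, ← lintegral_add_compl (fun s => P s B) hu]
    have hμ2B : μ₂ B ≥ ∫⁻ s, P s B ∂(μ₂.restrict u) + ∫⁻ s, P s B ∂(μ₁.restrict uᶜ) := by
      have h3 : μ₂ B = ∫⁻ s, P s B ∂(μ₂.restrict u) + ∫⁻ s, P s B ∂(μ₂.restrict uᶜ) := by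
        rw [hμ₂ B hB, ← lintegral_add_compl (fun s => P s B) hu]
      rw [h3]
      exact add_le_add_right (lintegral_mono' hle' le_rfl) _
    have hρ1B : μ₁.restrict u B = μ₁ B := by
      rw [Measure.restrict_apply hB, Set.inter_eq_self_of_subset_left hBu]
    have hρ2B : μ₂.restrict u B = μ₂ B := by
      rw [Measure.restrict_apply hB, Set.inter_eq_self_of_subset_left hBu]
    -- ν B + μ₂ B = μ₁ B
    have hsum : ν B + μ₂ B = μ₁ B := by
      have := happ B
      rwa [hρ1B, hρ2B] at this
    -- now: ν B + (∫ P·B ∂ρ₂ + ∫ P·B ∂(μ₁.restrict uᶜ)) ≤ ν B + μ₂ B = μ₁ B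
    --      = ∫ P·B ∂ν + ∫ P·B ∂ρ₂ + ∫ P·B ∂(μ₁.restrict uᶜ)
    have main : ν B + (∫⁻ s, P s B ∂(μ₂.restrict u) + ∫⁻ s, P s B ∂(μ₁.restrict uᶜ))
        ≤ (∫⁻ s, P s B ∂ν) + (∫⁻ s, P s B ∂(μ₂.restrict u)
          + ∫⁻ s, P s B ∂(μ₁.restrict uᶜ)) := by
      calc ν B + (∫⁻ s, P s B ∂(μ₂.restrict u) + ∫⁻ s, P s B ∂(μ₁.restrict uᶜ))
          ≤ ν B + μ₂ B := add_le_add_right hμ2B _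
        _ = μ₁ B := hsum
        _ = (∫⁻ s, P s B ∂ν) + ∫⁻ s, P s B ∂(μ₂.restrict u)
            + ∫⁻ s, P s B ∂(μ₁.restrict uᶜ) := by rw [hμ1B, hIB]
        _ = (∫⁻ s, P s B ∂ν) + (∫⁻ s, P s B ∂(μ₂.restrict u)
            + ∫⁻ s, P s B ∂(μ₁.restrict uᶜ)) := by rw [add_assoc]
    refine ENNReal.le_of_add_le_add_right ?_ main
    exact ENNReal.add_ne_top.2 ⟨hfinlint _ B, hfinlint _ B⟩
  -- step 2: equality from mass conservation
  intro A hA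
  haveI : IsFiniteMeasure ν := by
    rw [hνdef]
    infer_instance
  have hTsum : (∫⁻ s, P s A ∂ν) + ∫⁻ s, P s Aᶜ ∂ν = ν Set.univ := by
    rw [← lintegral_add_left (hmeasA hA)]
    have h1' : ∀ s, P s A + P s Aᶜ = 1 := fun s => by
      rw [measure_add_measure_compl hA, measure_univ]
    calc ∫⁻ s, P s A + P s Aᶜ ∂ν = ∫⁻ _, (1 : ℝ≥0∞) ∂ν := by simp_rw [h1']
      _ = ν Set.univ := lintegral_one
  have hνsum : ν A + ν Aᶜ = ν Set.univ := measure_add_measure_compl hA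
  refine le_antisymm (step1 A hA) ?_
  have hch : (∫⁻ s, P s A ∂ν) + ν Aᶜ ≤ ν A + ν Aᶜ := by
    calc (∫⁻ s, P s A ∂ν) + ν Aᶜ ≤ (∫⁻ s, P s A ∂ν) + ∫⁻ s, P s Aᶜ ∂ν :=
          add_le_add_right (step1 Aᶜ hA.compl) _
      _ = ν Set.univ := hTsum
      _ = ν A + ν Aᶜ := hνsum.symm
  exact ENNReal.le_of_add_le_add_right (measure_ne_top _ _) hch

end stmt11Aux

open stmt11Aux in
/-- on a compact metric space, for a strong Feller Markov kernel `P`, if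
there is exactly one minimal closed invariant set, then the invariant probability measure
is unique: any two invariant probability measures coincide. -/
theorem stmt_11
    {S : Type*} [MetricSpace S] [CompactSpace S] [MeasurableSpace S] [BorelSpace S]
    (P : S → Measure S) (hP : Measurable P) [∀ s, IsProbabilityMeasure (P s)]
    (hSF : ∀ f : S → ℝ, Measurable f → (∃ M, ∀ x, |f x| ≤ M) →
      Continuous fun s => ∫ x, f x ∂(P s))
    (hmin : ∃! C : Set S, MinimalClosedInvariantSet P C)
    (μ₁ μ₂ : Measure S) [IsProbabilityMeasure μ₁] [IsProbabilityMeasure μ₂]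
    (hμ₁ : ∀ A : Set S, MeasurableSet A → μ₁ A = ∫⁻ s, P s A ∂μ₁)
    (hμ₂ : ∀ A : Set S, MeasurableSet A → μ₂ A = ∫⁻ s, P s A ∂μ₂) :
    μ₁ = μ₂ := by
  by_contra hne
  obtain ⟨u, hu, h1, h2⟩ := hahn_decomposition (μ := μ₁) (ν := μ₂)
  -- the two "parts" of μ₁ - μ₂
  set νp := μ₁.restrict u - μ₂.restrict u with hνp
  set νm := μ₂.restrict uᶜ - μ₁.restrict uᶜ with hνm
  have hInvP : ∀ A : Set S, MeasurableSet A → νp A = ∫⁻ s, P s A ∂νp :=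
    sub_invariant P hP μ₁ μ₂ hμ₁ hμ₂ hu h1 h2
  have hInvM : ∀ A : Set S, MeasurableSet A → νm A = ∫⁻ s, P s A ∂νm := by
    refine sub_invariant P hP μ₂ μ₁ hμ₂ hμ₁ hu.compl h2 ?_
    intro t ht htu
    rw [compl_compl] at htu
    exact h1 t ht htu
  have hleP : μ₂.restrict u ≤ μ₁.restrict u := by
    refine Measure.le_iff.2 fun t ht => ?_
    rw [Measure.restrict_apply ht, Measure.restrict_apply ht]
    exact h1 _ (ht.inter hu) Set.inter_subset_right
  have hleM : μ₁.restrict uᶜ ≤ μ₂.restrict uᶜ := by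
    refine Measure.le_iff.2 fun t ht => ?_
    rw [Measure.restrict_apply ht, Measure.restrict_apply ht]
    exact h2 _ (ht.inter hu.compl) Set.inter_subset_right
  -- if μ₁ u = μ₂ u then μ₁ = μ₂, contradiction
  have hkey : μ₁ u ≠ μ₂ u := by
    intro huu
    apply hne
    have hucu : μ₁ uᶜ = μ₂ uᶜ := by
      rw [measure_compl hu (measure_ne_top _ _), measure_compl hu (measure_ne_top _ _),
        measure_univ, measure_univ, huu]
    ext A hA
    have e1 := cancel (h1 _ (hu.inter hA) Set.inter_subset_left)
      (h1 _ (hu.diff hA) Set.diff_subset)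
      (by rw [measure_inter_add_diff u hA, measure_inter_add_diff u hA, huu])
      (measure_ne_top _ _) (measure_ne_top _ _)
    have e2 := cancel (h2 _ (hu.compl.inter hA) Set.inter_subset_left)
      (h2 _ (hu.compl.diff hA) Set.diff_subset)
      (by rw [measure_inter_add_diff uᶜ hA, measure_inter_add_diff uᶜ hA, hucu])
      (measure_ne_top _ _) (measure_ne_top _ _)
    calc μ₁ A = μ₁ (A ∩ u) + μ₁ (A \ u) := (measure_inter_add_diff A hu).symm
      _ = μ₁ (u ∩ A) + μ₁ (uᶜ ∩ A) := by
          rw [Set.inter_comm A u, Set.diff_eq, Set.inter_comm A uᶜ]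
      _ = μ₂ (u ∩ A) + μ₂ (uᶜ ∩ A) := by rw [e1.1, e2.1]
      _ = μ₂ (A ∩ u) + μ₂ (A \ u) := by
          rw [Set.diff_eq, Set.inter_comm A u, Set.inter_comm A uᶜ]
      _ = μ₂ A := measure_inter_add_diff A hu
  -- the parts are nonzero
  have hνp0 : νp ≠ 0 := by
    intro h0
    apply hkey
    have := congrArg (fun m : Measure S => m Set.univ) h0
    simp only [hνp, Measure.coe_zero, Pi.zero_apply] at this
    rw [Measure.sub_apply MeasurableSet.univ hleP, Measure.restrict_apply_univ,
      Measure.restrict_apply_univ] at this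
    exact le_antisymm (tsub_eq_zero_iff_le.1 this) (h1 u hu subset_rfl)
  have hνm0 : νm ≠ 0 := by
    intro h0
    apply hkey
    have := congrArg (fun m : Measure S => m Set.univ) h0
    simp only [hνm, Measure.coe_zero, Pi.zero_apply] at this
    rw [Measure.sub_apply MeasurableSet.univ hleM, Measure.restrict_apply_univ,
      Measure.restrict_apply_univ] at this
    have hcc : μ₂ uᶜ = μ₁ uᶜ :=
      le_antisymm (tsub_eq_zero_iff_le.1 this) (h2 uᶜ hu.compl subset_rfl)
    have h₁ := measure_compl hu (measure_ne_top μ₁ _)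
    have h₂ := measure_compl hu (measure_ne_top μ₂ _)
    rw [measure_univ] at h₁ h₂
    rw [h₂, h₁] at hcc
    exact (ENNReal.sub_right_inj one_ne_top prob_le_one prob_le_one).1 hcc.symm
  haveI : IsFiniteMeasure νp := by rw [hνp]; infer_instance
  haveI : IsFiniteMeasure νm := by rw [hνm]; infer_instance
  -- supports are closed invariant, hence contain the unique minimal set C
  obtain ⟨C, hC, hCuniq⟩ := hmin
  have hsuppP : ClosedInvariantSet P (mSupp νp) :=
    closedInvariant_mSupp P hP hSF νp hνp0 hInvP
  have hsuppM : ClosedInvariantSet P (mSupp νm) :=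
    closedInvariant_mSupp P hP hSF νm hνm0 hInvM
  obtain ⟨mP, hmPsub, hmPmin⟩ := exists_minimal_subset P hsuppP
  obtain ⟨mM, hmMsub, hmMmin⟩ := exists_minimal_subset P hsuppM
  have hCP : C ⊆ mSupp νp := (hCuniq mP hmPmin) ▸ hmPsub
  have hCM : C ⊆ mSupp νm := (hCuniq mM hmMmin) ▸ hmMsub
  obtain ⟨x, hxC⟩ := hC.1.1
  -- mutual singularity: νp (uᶜ) = 0, νm u = 0
  have hpnull : νp uᶜ = 0 := by
    rw [hνp, Measure.sub_apply hu.compl hleP, Measure.restrict_apply hu.compl]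
    simp [zero_tsub]
  have hmnull : νm u = 0 := by
    rw [hνm, Measure.sub_apply hu hleM, Measure.restrict_apply hu]
    simp [zero_tsub]
  have hP1 : P x uᶜ = 0 :=
    kernel_null_of_null P hP hSF νp hInvP hu.compl hpnull (hCP hxC)
  have hP2 : P x u = 0 :=
    kernel_null_of_null P hP hSF νm hInvM hu hmnull (hCM hxC)
  have := measure_add_measure_compl (μ := P x) hu
  rw [hP1, hP2, measure_univ, add_zero] at this
  exact zero_ne_one this
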